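/- For every integer n ≥ 1, one has ∏_{p | n} (1 + 1/p) ≤ 1 + (log n) / (2 log 2), where the product is taken over all rational primes p dividing n. -/

import Mathlib

open Finset Real

lemma sum_log_crux {p : ℕ} (hp : p.Prime) (s : Finset ℕ) (hs : ∀ q ∈ s, q.Prime)
    (hlt : ∀ q ∈ s, q < p) :
    2 * Real.log 2 + ∑ q ∈ s, Real.log q ≤ p * Real.log p := by
  have hMpos : 0 < ∏ q ∈ s, q := Finset.prod_pos fun q hq => (hs q hq).pos
  have hsum : ∑ q ∈ s, Real.log q = Real.log ((∏ q ∈ s, q : ℕ) : ℝ) := by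
    rw [Nat.cast_prod, Real.log_prod]
    intro q hq
    exact_mod_cast (hs q hq).pos.ne'
  rcases lt_or_ge p 5 with h5 | h5
  · interval_cases p
    · exact absurd hp (by norm_num)
    · exact absurd hp (by norm_num)
    · -- p = 2: s = ∅
      have hse : s = ∅ := by
        ext q; simp only [Finset.notMem_empty, iff_false]
        intro hq
        have := (hs q hq).two_le
        have := hlt q hq
        omega
      subst hse
      simp
    · -- p = 3: s ⊆ {2}
      have hsub : s ⊆ {2} := by
        intro q hq
        have h2 := (hs q hq).two_le
        have h3 := hlt q hq
        simp only [Finset.mem_singleton]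
        omega
      have hll := Real.log_le_log (show (0:ℝ) < 2 by norm_num) (show (2:ℝ) ≤ 3 by norm_num)
      have hl2 : (0:ℝ) < Real.log 2 := Real.log_pos (by norm_num)
      rcases Finset.subset_singleton_iff.mp hsub with h | h <;> subst h <;>
        simp <;> push_cast <;> nlinarith
    · exact absurd hp (by norm_num)
  · -- p ≥ 5
    have hMdvd : (∏ q ∈ s, q) ∣ primorial (p - 1) := by
      have hpe : (p - 1) + 1 = p := Nat.succ_pred_eq_of_pos hp.pos
      rw [primorial, hpe]
      exact Finset.prod_dvd_prod_of_subset s _ _ (fun q hq => by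
        simp only [Finset.mem_filter, Finset.mem_range]
        exact ⟨hlt q hq, hs q hq⟩)
    have hMle : (∏ q ∈ s, q) ≤ 4 ^ (p - 1) :=
      le_trans (Nat.le_of_dvd (primorial_pos _) hMdvd) (primorial_le_4_pow _)
    have hlogM : Real.log ((∏ q ∈ s, q : ℕ) : ℝ) ≤ ((p:ℝ) - 1) * Real.log 4 := by
      have : Real.log ((∏ q ∈ s, q : ℕ) : ℝ) ≤ Real.log ((4:ℝ) ^ (p - 1)) := by
        apply Real.log_le_log (by exact_mod_cast hMpos)
        exact_mod_cast hMle
      rw [Real.log_pow] at this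
      have hc : ((p - 1 : ℕ) : ℝ) = (p:ℝ) - 1 := by
        have := hp.pos; push_cast [Nat.cast_sub this]; ring
      rwa [hc] at this
    have h4 : Real.log 4 = 2 * Real.log 2 := by
      rw [show (4:ℝ) = 2 ^ 2 by norm_num, Real.log_pow]; push_cast; ring
    have hlp : Real.log 4 ≤ Real.log p := by
      apply Real.log_le_log (by norm_num)
      exact_mod_cast by omega
    have hpc : (5:ℝ) ≤ p := by exact_mod_cast h5
    have h2pos : (0:ℝ) < Real.log 2 := Real.log_pos (by norm_num)
    rw [hsum]
    nlinarith [hlogM, hlp, hpc, h2pos]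

lemma key_prod (S : Finset ℕ) (hS : ∀ p ∈ S, p.Prime) :
    ∏ p ∈ S, (1 + 1 / (p : ℝ)) ≤ 1 + (∑ p ∈ S, Real.log p) / (2 * Real.log 2) := by
  induction S using Finset.induction_on_max with
  | empty => simp
  | insert p s hlt ih =>
    have hp : p.Prime := hS p (Finset.mem_insert_self p s)
    have hs : ∀ q ∈ s, q.Prime := fun q hq => hS q (Finset.mem_insert_of_mem hq)
    have hns : p ∉ s := fun h => lt_irrefl p (hlt p h)
    rw [Finset.prod_insert hns, Finset.sum_insert hns]
    have ih' := ih hs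
    have hT : 0 ≤ ∑ q ∈ s, Real.log q :=
      Finset.sum_nonneg fun q hq => Real.log_nonneg (by exact_mod_cast (hs q hq).one_lt.le)
    have hcrux := sum_log_crux hp s hs fun q hq => hlt q hq
    have h2pos : (0:ℝ) < Real.log 2 := Real.log_pos (by norm_num)
    have hppos : (0:ℝ) < p := by exact_mod_cast hp.pos
    have hpf : (0:ℝ) < 1 + 1 / (p:ℝ) := by positivity
    set T := ∑ q ∈ s, Real.log q with hTdef
    have h1 : ∏ q ∈ s, (1 + 1 / (q : ℝ)) ≤ 1 + T / (2 * Real.log 2) := ih'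
    have step1 : (1 + 1 / (p:ℝ)) * ∏ q ∈ s, (1 + 1 / (q : ℝ))
        ≤ (1 + 1 / (p:ℝ)) * (1 + T / (2 * Real.log 2)) := by
      exact mul_le_mul_of_nonneg_left h1 hpf.le
    refine step1.trans ?_
    have hkey : (1 + 1 / (p:ℝ)) * (1 + T / (2 * Real.log 2))
        = 1 + T / (2 * Real.log 2) + (1 + T / (2 * Real.log 2)) / p := by
      field_simp
    rw [hkey]
    have : (1 + T / (2 * Real.log 2)) / (p:ℝ) ≤ Real.log p / (2 * Real.log 2) := by
      rw [div_le_div_iff₀ hppos (by positivity)]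
      have : (1 + T / (2 * Real.log 2)) * (2 * Real.log 2) = 2 * Real.log 2 + T := by
        field_simp
      rw [this]
      nlinarith [hcrux]
    have hsplit : (Real.log p + T) / (2 * Real.log 2)
        = Real.log p / (2 * Real.log 2) + T / (2 * Real.log 2) := add_div _ _ _
    rw [hsplit]
    linarith [this]

/-- For every integer `n ≥ 1`, `∏_{p ∣ n} (1 + 1/p) ≤ 1 + log n / (2 log 2)`, the product
taken over all primes `p` dividing `n`. -/
theorem prod_one_add_inv_primeFactors_le (n : ℕ) (hn : 1 ≤ n) :
    ∏ p ∈ n.primeFactors, (1 + 1 / (p : ℝ)) ≤ 1 + Real.log n / (2 * Real.log 2) := by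
  have h1 := key_prod n.primeFactors (fun p hp => Nat.prime_of_mem_primeFactors hp)
  refine h1.trans ?_
  have h2pos : (0:ℝ) < Real.log 2 := Real.log_pos (by norm_num)
  refine add_le_add_right ?_ 1
  rw [div_le_div_iff_of_pos_right (by positivity)]
  have hsum : ∑ p ∈ n.primeFactors, Real.log p
      = Real.log ((∏ p ∈ n.primeFactors, p : ℕ) : ℝ) := by
    rw [Nat.cast_prod, Real.log_prod]
    intro q hq
    exact_mod_cast (Nat.prime_of_mem_primeFactors hq).pos.ne'
  rw [hsum]
  apply Real.log_le_log
  · exact_mod_cast Finset.prod_pos fun q hq => (Nat.prime_of_mem_primeFactors hq).pos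
  · exact_mod_cast Nat.le_of_dvd hn (Nat.prod_primeFactors_dvd n)
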